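/- Fix a real parameter c and natural numbers l and ν. For every real x > 0, the complementary polynomial of the confluent hypergeometric equation has the explicit form 𝒫_ν(x,l) = Σ_{μ=0}^{ν} C(c−1+l, ν−μ) · (ν!/μ!) · (−x)^μ, where C(r,k) = (∏_{i=0}^{k−1}(r−i))/k! is the generalized binomial coefficient. -/

import Mathlib

open Real Finset

lemma alg (a x e : ℝ) (ν : ℕ) :
    ∑ μ ∈ Finset.range (ν + 1),
      (ν.choose μ : ℝ) * (∏ i ∈ Finset.range (ν - μ), (a - (i:ℝ))) * (-1:ℝ)^μ *
        ((a - (ν:ℝ) + μ) * x ^ (a - (ν:ℝ) + μ - 1) * e + x ^ (a - (ν:ℝ) + μ) * (e * (-1)))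
  = ∑ μ ∈ Finset.range (ν + 1 + 1),
      (((ν+1).choose μ : ℝ)) * (∏ i ∈ Finset.range (ν + 1 - μ), (a - (i:ℝ))) * (-1:ℝ)^μ *
        x ^ (a - ((ν:ℝ)+1) + μ) * e := by
  have hterm : ∀ μ ∈ Finset.range (ν + 1),
      (ν.choose μ : ℝ) * (∏ i ∈ Finset.range (ν - μ), (a - (i:ℝ))) * (-1:ℝ)^μ *
        ((a - (ν:ℝ) + μ) * x ^ (a - (ν:ℝ) + μ - 1) * e + x ^ (a - (ν:ℝ) + μ) * (e * (-1)))
      = ((ν.choose μ : ℝ) * (∏ i ∈ Finset.range (ν + 1 - μ), (a - (i:ℝ))) * (-1:ℝ)^μ *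
          x ^ (a - ((ν:ℝ)+1) + μ) * e)
        - ((ν.choose μ : ℝ) * (∏ i ∈ Finset.range (ν - μ), (a - (i:ℝ))) * (-1:ℝ)^μ *
          x ^ (a - (ν:ℝ) + μ) * e) := by
    intro μ hμ
    rw [Finset.mem_range] at hμ
    have hμν : μ ≤ ν := Nat.lt_succ_iff.mp hμ
    have h1 : ν + 1 - μ = (ν - μ) + 1 := by omega
    have h2 : (↑(ν - μ) : ℝ) = (ν:ℝ) - μ := by
      push_cast [Nat.cast_sub hμν]; ring
    have h3 : a - (ν:ℝ) + μ - 1 = a - ((ν:ℝ)+1) + μ := by ring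
    rw [h1, Finset.prod_range_succ, h2, h3]
    ring
  rw [Finset.sum_congr rfl hterm, Finset.sum_sub_distrib]
  -- extend the first sum to range (ν+2)
  have hP : ∑ μ ∈ Finset.range (ν + 1),
      ((ν.choose μ : ℝ) * (∏ i ∈ Finset.range (ν + 1 - μ), (a - (i:ℝ))) * (-1:ℝ)^μ *
          x ^ (a - ((ν:ℝ)+1) + μ) * e)
      = ∑ μ ∈ Finset.range (ν + 1 + 1),
      ((ν.choose μ : ℝ) * (∏ i ∈ Finset.range (ν + 1 - μ), (a - (i:ℝ))) * (-1:ℝ)^μ *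
          x ^ (a - ((ν:ℝ)+1) + μ) * e) := by
    rw [Finset.sum_range_succ (n := ν + 1)]
    simp [Nat.choose_succ_self]
  rw [hP, Finset.sum_range_succ' _ (ν + 1), Finset.sum_range_succ' (fun μ =>
      (((ν+1).choose μ : ℝ)) * (∏ i ∈ Finset.range (ν + 1 - μ), (a - (i:ℝ))) * (-1:ℝ)^μ *
        x ^ (a - ((ν:ℝ)+1) + μ) * e) (ν+1)]
  have hzero : (((ν+1).choose 0 : ℝ)) * (∏ i ∈ Finset.range (ν + 1 - 0), (a - (i:ℝ))) * (-1:ℝ)^(0:ℕ) *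
        x ^ (a - ((ν:ℝ)+1) + (0:ℕ)) * e
      = ((ν.choose 0 : ℝ) * (∏ i ∈ Finset.range (ν + 1 - 0), (a - (i:ℝ))) * (-1:ℝ)^(0:ℕ) *
          x ^ (a - ((ν:ℝ)+1) + (0:ℕ)) * e) := by norm_num
  rw [hzero]
  rw [add_sub_right_comm, ← Finset.sum_sub_distrib]
  congr 1
  refine Finset.sum_congr rfl fun k hk => ?_
  rw [Finset.mem_range] at hk
  have h1 : ν + 1 - (k + 1) = ν - k := by omega
  have h2 : (ν+1).choose (k+1) = ν.choose k + ν.choose (k+1) := Nat.choose_succ_succ ν k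
  have h3 : a - ((ν:ℝ)+1) + (↑(k+1):ℝ) = a - (ν:ℝ) + k := by push_cast; ring
  rw [h1, h2, h3]
  push_cast
  ring

lemma key (a : ℝ) (ν : ℕ) : ∀ x : ℝ, 0 < x →
    iteratedDeriv ν (fun t : ℝ => t ^ a * Real.exp (-t)) x
      = ∑ μ ∈ Finset.range (ν + 1),
          (ν.choose μ : ℝ) * (∏ i ∈ Finset.range (ν - μ), (a - (i:ℝ))) * (-1:ℝ)^μ
            * x ^ (a - (ν:ℝ) + μ) * Real.exp (-x) := by
  induction ν with
  | zero =>
    intro x hx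
    simp [iteratedDeriv_zero]
  | succ ν ih =>
    intro x hx
    rw [iteratedDeriv_succ]
    have hEq : iteratedDeriv ν (fun t : ℝ => t ^ a * Real.exp (-t))
        =ᶠ[nhds x] (fun y => ∑ μ ∈ Finset.range (ν + 1),
          (ν.choose μ : ℝ) * (∏ i ∈ Finset.range (ν - μ), (a - (i:ℝ))) * (-1:ℝ)^μ
            * y ^ (a - (ν:ℝ) + μ) * Real.exp (-y)) := by
      filter_upwards [Ioi_mem_nhds hx] with y hy
      exact ih y hy
    rw [hEq.deriv_eq]
    have hder : HasDerivAt (fun y : ℝ => ∑ μ ∈ Finset.range (ν + 1),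
          (ν.choose μ : ℝ) * (∏ i ∈ Finset.range (ν - μ), (a - (i:ℝ))) * (-1:ℝ)^μ
            * y ^ (a - (ν:ℝ) + μ) * Real.exp (-y))
        (∑ μ ∈ Finset.range (ν + 1),
          (ν.choose μ : ℝ) * (∏ i ∈ Finset.range (ν - μ), (a - (i:ℝ))) * (-1:ℝ)^μ *
            ((a - (ν:ℝ) + μ) * x ^ (a - (ν:ℝ) + μ - 1) * Real.exp (-x)
              + x ^ (a - (ν:ℝ) + μ) * (Real.exp (-x) * (-1)))) x := by
      refine HasDerivAt.fun_sum fun μ _ => ?_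
      have h1 : HasDerivAt (fun y : ℝ => y ^ (a - (ν:ℝ) + μ))
          ((a - (ν:ℝ) + μ) * x ^ (a - (ν:ℝ) + μ - 1)) x :=
        Real.hasDerivAt_rpow_const (Or.inl hx.ne')
      have h2 : HasDerivAt (fun y : ℝ => Real.exp (-y)) (Real.exp (-x) * (-1)) x :=
        (Real.hasDerivAt_exp (-x)).comp x (hasDerivAt_neg x)
      have := (h1.mul h2).const_mul
        ((ν.choose μ : ℝ) * (∏ i ∈ Finset.range (ν - μ), (a - (i:ℝ))) * (-1:ℝ)^μ)
      convert this using 1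
      · rfl
      funext y; simp only [Pi.mul_apply]; ring
    rw [hder.deriv, alg]
    push_cast
    rfl

/-- Complementary polynomial of the confluent hypergeometric equation:
`𝒫_ν(x,l) = x^(1-c+ν-l) · e^x · (dᵛ/dtᵛ)(t^(c-1+l) e^(-t)) |_{t=x}` (rpow powers). -/
noncomputable def complConfluent (c : ℝ) (l ν : ℕ) (x : ℝ) : ℝ :=
  x ^ (1 - c + (ν : ℝ) - (l : ℝ)) * Real.exp x *
    iteratedDeriv ν (fun t : ℝ => t ^ (c - 1 + (l : ℝ)) * Real.exp (-t)) x

/-- Generalized binomial coefficient `C(r,k) = (∏_{i<k} (r-i)) / k!`. -/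
noncomputable def genBinom (r : ℝ) (k : ℕ) : ℝ :=
  (∏ i ∈ Finset.range k, (r - (i : ℝ))) / (Nat.factorial k : ℝ)

theorem complConfluent_explicit (c : ℝ) (l ν : ℕ) (x : ℝ) (hx : 0 < x) :
    complConfluent c l ν x
      = ∑ μ ∈ Finset.range (ν + 1),
          genBinom (c - 1 + (l : ℝ)) (ν - μ)
            * ((Nat.factorial ν : ℝ) / (Nat.factorial μ : ℝ)) * (-x) ^ μ := by
  unfold complConfluent
  rw [key (c - 1 + (l:ℝ)) ν x hx, Finset.mul_sum]
  refine Finset.sum_congr rfl fun μ hμ => ?_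
  rw [Finset.mem_range] at hμ
  have hμν : μ ≤ ν := Nat.lt_succ_iff.mp hμ
  have h1 : Real.exp x * Real.exp (-x) = 1 := by rw [← Real.exp_add]; simp
  have hfac : x ^ (1 - c + (ν:ℝ) - (l:ℝ)) * x ^ (c - 1 + (l:ℝ) - (ν:ℝ) + (μ:ℝ)) = x ^ μ := by
    rw [← Real.rpow_add hx,
      show (1 - c + (ν:ℝ) - (l:ℝ)) + (c - 1 + (l:ℝ) - (ν:ℝ) + (μ:ℝ)) = (μ:ℝ) by ring,
      Real.rpow_natCast]
  calc x ^ (1 - c + (ν:ℝ) - (l:ℝ)) * Real.exp x *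
        ((ν.choose μ : ℝ) * (∏ i ∈ Finset.range (ν - μ), (c - 1 + (l:ℝ) - (i:ℝ))) * (-1:ℝ)^μ
          * x ^ (c - 1 + (l:ℝ) - (ν:ℝ) + (μ:ℝ)) * Real.exp (-x))
      = (ν.choose μ : ℝ) * (∏ i ∈ Finset.range (ν - μ), (c - 1 + (l:ℝ) - (i:ℝ))) * (-1:ℝ)^μ
          * (x ^ (1 - c + (ν:ℝ) - (l:ℝ)) * x ^ (c - 1 + (l:ℝ) - (ν:ℝ) + (μ:ℝ)))
          * (Real.exp x * Real.exp (-x)) := by ring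
    _ = (ν.choose μ : ℝ) * (∏ i ∈ Finset.range (ν - μ), (c - 1 + (l:ℝ) - (i:ℝ))) * (-1:ℝ)^μ
          * x ^ μ * 1 := by rw [hfac, h1]
    _ = genBinom (c - 1 + (l:ℝ)) (ν - μ) * ((Nat.factorial ν : ℝ) / (Nat.factorial μ : ℝ))
          * (-x) ^ μ := by
        rw [Nat.cast_choose ℝ hμν, genBinom, neg_pow]
        have f1 : (Nat.factorial μ : ℝ) ≠ 0 := Nat.cast_ne_zero.mpr (Nat.factorial_ne_zero μ)
        have f2 : (Nat.factorial (ν - μ) : ℝ) ≠ 0 := Nat.cast_ne_zero.mpr (Nat.factorial_ne_zero _)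
        field_simp
        ring
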